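/- The vector g = (1/N) * Σ_{i=1}^{m} (c_i - d_i)·x_i is a subgradient at w of the function R(v) = (1/N) * Σ_{(i,j): y_i < y_j} max(0, 1 + ⟨v,x_i⟩ - ⟨v,x_j⟩); that is, for all v ∈ ℝ^n, R(v) ≥ R(w) + ⟨v - w, g⟩. -/

import Mathlib

open Finset

lemma ranksvm_aux {m : ℕ} (p q : Fin m → Fin m → Prop)
    [∀ i j, Decidable (p i j)] [∀ i j, Decidable (q i j)]
    (T : Fin m → ℝ) :
    ∑ i, (((univ.filter fun j => p i j ∧ q i j).card : ℝ)
        - ((univ.filter fun j => p j i ∧ q j i).card : ℝ)) * T i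
    = ∑ ij ∈ univ.filter (fun ij : Fin m × Fin m => p ij.1 ij.2),
        (if q ij.1 ij.2 then T ij.1 - T ij.2 else 0) := by
  have hcard : ∀ (r : Fin m → Prop) (_ : DecidablePred r),
      ((univ.filter r).card : ℝ) = ∑ j, if r j then (1:ℝ) else 0 := by
    intro r _
    rw [Finset.card_filter]
    push_cast
    simp
  have lhs : ∑ i, (((univ.filter fun j => p i j ∧ q i j).card : ℝ)
        - ((univ.filter fun j => p j i ∧ q j i).card : ℝ)) * T i
      = ∑ i, ∑ j, ((if p i j ∧ q i j then T i else 0) - (if p j i ∧ q j i then T i else 0)) := by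
    refine Finset.sum_congr rfl fun i _ => ?_
    rw [hcard _ inferInstance, hcard _ inferInstance, sub_mul, Finset.sum_mul, Finset.sum_mul,
      ← Finset.sum_sub_distrib]
    refine Finset.sum_congr rfl fun j _ => ?_
    split <;> split <;> ring
  rw [lhs]
  have swap : ∑ i, ∑ j, (if p j i ∧ q j i then T i else 0)
      = ∑ i, ∑ j, (if p i j ∧ q i j then T j else 0) := by rw [Finset.sum_comm]
  have combine : ∑ i, ∑ j, ((if p i j ∧ q i j then T i else 0) - (if p j i ∧ q j i then T i else 0))
      = ∑ i, ∑ j, (if p i j ∧ q i j then T i - T j else 0) := by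
    simp only [Finset.sum_sub_distrib]
    rw [swap, ← Finset.sum_sub_distrib]
    refine Finset.sum_congr rfl fun i _ => ?_
    rw [← Finset.sum_sub_distrib]
    refine Finset.sum_congr rfl fun j _ => ?_
    split <;> simp
  rw [combine, Finset.sum_filter, Fintype.sum_prod_type]
  refine Finset.sum_congr rfl fun i _ => Finset.sum_congr rfl fun j _ => ?_
  simp [ite_and]

theorem ranksvm_subgradient
    (m n : ℕ) (x : Fin m → Fin n → ℝ) (y : Fin m → ℝ) (w : Fin n → ℝ)
    (N : ℕ) (hN : N = (univ.filter (fun ij : Fin m × Fin m => y ij.1 < y ij.2)).card)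
    (hNpos : 0 < N)
    (c d : Fin m → ℕ)
    (hc : ∀ i, c i = (univ.filter (fun j : Fin m =>
        y i < y j ∧ (∑ k, w k * x i k) > (∑ k, w k * x j k) - 1)).card)
    (hd : ∀ i, d i = (univ.filter (fun j : Fin m =>
        y i > y j ∧ (∑ k, w k * x i k) < (∑ k, w k * x j k) + 1)).card)
    (R : (Fin n → ℝ) → ℝ)
    (hR : ∀ v, R v = (1 / (N : ℝ)) *
        ∑ ij ∈ univ.filter (fun ij : Fin m × Fin m => y ij.1 < y ij.2),
          max 0 (1 + (∑ k, v k * x ij.1 k) - (∑ k, v k * x ij.2 k)))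
    (g : Fin n → ℝ)
    (hg : ∀ k, g k = (1 / (N : ℝ)) * ∑ i, ((c i : ℝ) - (d i : ℝ)) * x i k) :
    ∀ v : Fin n → ℝ, R v ≥ R w + ∑ k, (v k - w k) * g k := by
  intro v
  have hNR : (0:ℝ) < (N:ℝ) := by exact_mod_cast hNpos
  have hd' : ∀ i, (d i : ℕ) = ((univ.filter fun j : Fin m =>
      y j < y i ∧ (∑ k, w k * x j k) > (∑ k, w k * x i k) - 1).card) := by
    intro i
    rw [hd i]
    congr 1
    refine Finset.filter_congr fun j _ => ?_
    constructor
    · rintro ⟨h1, h2⟩; exact ⟨h1, by linarith⟩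
    · rintro ⟨h1, h2⟩; exact ⟨h1, by linarith⟩
  have e1 : ∀ i, ((c i:ℝ) - (d i:ℝ)) * ((∑ k, v k * x i k) - (∑ k, w k * x i k))
      = ∑ k, (v k - w k) * (((c i:ℝ) - (d i:ℝ)) * x i k) := by
    intro i
    rw [← Finset.sum_sub_distrib, Finset.mul_sum]
    exact Finset.sum_congr rfl fun k _ => by ring
  have h1 : ∑ k, (v k - w k) * g k
      = (1/(N:ℝ)) * ∑ i, ((c i : ℝ) - (d i : ℝ)) *
          ((∑ k, v k * x i k) - (∑ k, w k * x i k)) := by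
    simp only [hg, e1, Finset.mul_sum]
    rw [Finset.sum_comm]
    exact Finset.sum_congr rfl fun k _ => Finset.sum_congr rfl fun i _ => by ring
  have key : ∑ k, (v k - w k) * g k
      = (1/(N:ℝ)) * ∑ ij ∈ univ.filter (fun ij : Fin m × Fin m => y ij.1 < y ij.2),
          (if (∑ k, w k * x ij.1 k) > (∑ k, w k * x ij.2 k) - 1 then
            ((∑ k, v k * x ij.1 k) - (∑ k, w k * x ij.1 k))
            - ((∑ k, v k * x ij.2 k) - (∑ k, w k * x ij.2 k)) else 0) := by
    rw [h1]
    congr 1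
    have := ranksvm_aux (fun i j => y i < y j)
      (fun i j => (∑ k, w k * x i k) > (∑ k, w k * x j k) - 1)
      (fun i => (∑ k, v k * x i k) - (∑ k, w k * x i k))
    rw [← this]
    refine Finset.sum_congr rfl fun i _ => ?_
    rw [hc i, hd' i]
  rw [hR v, hR w, key, ge_iff_le, ← sub_nonneg]
  have hterm : ∀ ij ∈ univ.filter (fun ij : Fin m × Fin m => y ij.1 < y ij.2),
      (0:ℝ) ≤ max 0 (1 + (∑ k, v k * x ij.1 k) - (∑ k, v k * x ij.2 k))
        - max 0 (1 + (∑ k, w k * x ij.1 k) - (∑ k, w k * x ij.2 k))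
        - (if (∑ k, w k * x ij.1 k) > (∑ k, w k * x ij.2 k) - 1 then
            ((∑ k, v k * x ij.1 k) - (∑ k, w k * x ij.1 k))
            - ((∑ k, v k * x ij.2 k) - (∑ k, w k * x ij.2 k)) else 0) := by
    intro ij _
    by_cases hact : (∑ k, w k * x ij.1 k) > (∑ k, w k * x ij.2 k) - 1
    · rw [if_pos hact]
      have h2 : max 0 (1 + (∑ k, w k * x ij.1 k) - (∑ k, w k * x ij.2 k))
          = 1 + (∑ k, w k * x ij.1 k) - (∑ k, w k * x ij.2 k) := max_eq_right (by linarith)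
      have h3 := le_max_right (0:ℝ) (1 + (∑ k, v k * x ij.1 k) - (∑ k, v k * x ij.2 k))
      linarith
    · rw [if_neg hact]
      push_neg at hact
      have h2 : max 0 (1 + (∑ k, w k * x ij.1 k) - (∑ k, w k * x ij.2 k)) = 0 :=
        max_eq_left (by linarith)
      have h3 := le_max_left (0:ℝ) (1 + (∑ k, v k * x ij.1 k) - (∑ k, v k * x ij.2 k))
      linarith
  have hpos := mul_nonneg (le_of_lt (by positivity : (0:ℝ) < 1/(N:ℝ)))
    (Finset.sum_nonneg hterm)
  calc (0:ℝ) ≤ (1/(N:ℝ)) * ∑ ij ∈ univ.filter (fun ij : Fin m × Fin m => y ij.1 < y ij.2),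
      (max 0 (1 + (∑ k, v k * x ij.1 k) - (∑ k, v k * x ij.2 k))
        - max 0 (1 + (∑ k, w k * x ij.1 k) - (∑ k, w k * x ij.2 k))
        - (if (∑ k, w k * x ij.1 k) > (∑ k, w k * x ij.2 k) - 1 then
            ((∑ k, v k * x ij.1 k) - (∑ k, w k * x ij.1 k))
            - ((∑ k, v k * x ij.2 k) - (∑ k, w k * x ij.2 k)) else 0)) := hpos
    _ = _ := by
      rw [Finset.sum_sub_distrib, Finset.sum_sub_distrib]
      ring
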